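/- Let n ≥ 1. Then Σ_{h=0}^{n−1} Σ_{k=0}^{n−1} |{π a permutation of ℤ/nℤ : π = σ^k ∘ π⁻¹ ∘ σ^{−h}}| = n · Σ_{d | n} φ(d)·sr(d, n/d), the sum on the right being over all positive divisors d of n. -/

import Mathlib

/-- `ma m j` is the number of `j`-matchings of an `m`-element set. -/
def ma (m j : ℕ) : ℕ := m.factorial / ((m - 2 * j).factorial * 2 ^ j * j.factorial)

/-- `sr ℓ m` as in the paper. -/
def sr (l m : ℕ) : ℕ :=
  if l % 2 = 0 then
    if m % 2 = 1 then 0 else ma m (m / 2) * l ^ (m / 2)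
  else
    ∑ j ∈ Finset.range (m / 2 + 1), ma m j * l ^ j

open Nat Finset


def ma' (m j : ℕ) : ℕ := m.choose (2 * j) * (2 * j - 1)‼

lemma dfact_odd (j : ℕ) : (2 * j + 1)‼ = (2 * j + 1) * (2 * j - 1)‼ := by
  cases j with
  | zero => rfl
  | succ j =>
      have h1 : 2 * (j + 1) + 1 = (2 * j + 1) + 2 := by ring
      have h2 : 2 * (j + 1) - 1 = 2 * j + 1 := by omega
      rw [h1, h2, Nat.doubleFactorial_add_two]

lemma two_mul_factorial (j : ℕ) : (2 * j)! = 2 ^ j * j ! * (2 * j - 1)‼ := by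
  cases j with
  | zero => rfl
  | succ j =>
      have h1 : 2 * (j + 1) = (2 * j + 1) + 1 := by ring
      have h2 : 2 * (j + 1) - 1 = 2 * j + 1 := by omega
      rw [h2, h1, Nat.factorial_eq_mul_doubleFactorial, ← h1, Nat.doubleFactorial_two_mul]

lemma ma_eq_ma' (m j : ℕ) (h : 2 * j ≤ m) : ma m j = ma' m j := by
  have key : m ! = ma' m j * ((m - 2 * j)! * 2 ^ j * j !) := by
    rw [← Nat.choose_mul_factorial_mul_factorial h, ma', two_mul_factorial]
    ring
  have hpos : 0 < (m - 2 * j)! * 2 ^ j * j ! := by positivity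
  rw [ma, key, Nat.mul_div_cancel _ hpos]

lemma ma'_zero (m : ℕ) : ma' m 0 = 1 := by simp [ma']

lemma ma'_eq_zero (m j : ℕ) (h : m < 2 * j) : ma' m j = 0 := by
  simp [ma', Nat.choose_eq_zero_of_lt h]

lemma ma'_rec (m j : ℕ) : ma' (m + 2) (j + 1) = ma' (m + 1) (j + 1) + (m + 1) * ma' m j := by
  have h2 : 2 * (j + 1) = (2 * j + 1) + 1 := by ring
  have pascal : (m + 2).choose (2 * (j + 1))
      = (m + 1).choose (2 * j + 1) + (m + 1).choose (2 * (j + 1)) := by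
    rw [h2]; exact Nat.choose_succ_succ (m + 1) (2 * j + 1)
  have key : (m + 1).choose (2 * j + 1) * (2 * (j + 1) - 1)‼ = (m + 1) * ma' m j := by
    have h3 : 2 * (j + 1) - 1 = 2 * j + 1 := by omega
    have h4 := Nat.add_one_mul_choose_eq m (2 * j)
    rw [h3, dfact_odd, ma']
    calc (m + 1).choose (2 * j + 1) * ((2 * j + 1) * (2 * j - 1)‼)
        = ((m + 1).choose (2 * j + 1) * (2 * j + 1)) * (2 * j - 1)‼ := by ring
      _ = ((m + 1) * m.choose (2 * j)) * (2 * j - 1)‼ := by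
          congr 1
          rw [← h4]
      _ = (m + 1) * (m.choose (2 * j) * (2 * j - 1)‼) := by ring
  rw [ma', pascal, add_mul, key, ← ma']
  exact Nat.add_comm _ _

def T (l m : ℕ) : ℕ := ∑ j ∈ Finset.range (m + 1), ma' m j * l ^ j

lemma sr_odd_eq_T (l m : ℕ) (hl : l % 2 = 1) : sr l m = T l m := by
  rw [sr, if_neg (by omega), T]
  rw [Finset.sum_congr rfl (fun j hj => by
    rw [ma_eq_ma' m j (by simp only [Finset.mem_range] at hj; omega)])]
  refine Finset.sum_subset (Finset.range_subset_range.2 (by omega)) ?_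
  intro j hj hj2
  simp only [Finset.mem_range] at hj hj2
  rw [ma'_eq_zero m j (by omega), zero_mul]

lemma T_rec (l m : ℕ) : T l (m + 2) = T l (m + 1) + (m + 1) * l * T l m := by
  have e3 : T l (m + 1)
      = (∑ j ∈ Finset.range (m + 2), ma' (m + 1) (j + 1) * l ^ (j + 1)) + 1 := by
    have top : ∑ j ∈ Finset.range (m + 2 + 1), ma' (m + 1) j * l ^ j = T l (m + 1) := by
      rw [Finset.sum_range_succ, ma'_eq_zero (m + 1) (m + 2) (by omega), T]
      simp
    rw [← top, Finset.sum_range_succ' (fun j => ma' (m + 1) j * l ^ j) (m + 2)]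
    simp [ma'_zero]
  have e4 : (∑ j ∈ Finset.range (m + 2), (m + 1) * ma' m j * l ^ (j + 1))
      = (m + 1) * l * T l m := by
    have htop : ∑ j ∈ Finset.range (m + 2), ma' m j * l ^ j = T l m := by
      rw [Finset.sum_range_succ, ma'_eq_zero m (m + 1) (by omega), T]
      simp
    rw [← htop, Finset.mul_sum]
    exact Finset.sum_congr rfl (fun j _ => by ring)
  have e1 : T l (m + 2) = (∑ j ∈ Finset.range (m + 2), ma' (m + 2) (j + 1) * l ^ (j + 1)) + 1 := by
    rw [T, Finset.sum_range_succ' (fun j => ma' (m + 2) j * l ^ j) (m + 2)]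
    simp [ma'_zero]
  rw [e1, e3, ← e4]
  have e2 : ∀ j ∈ Finset.range (m + 2), ma' (m + 2) (j + 1) * l ^ (j + 1)
      = ma' (m + 1) (j + 1) * l ^ (j + 1) + (m + 1) * ma' m j * l ^ (j + 1) := by
    intro j _; rw [ma'_rec]; ring
  rw [Finset.sum_congr rfl e2, Finset.sum_add_distrib]
  ring

lemma sr_zero (l : ℕ) : sr l 0 = 1 := by
  rcases Nat.even_or_odd l with h | h
  · rw [Nat.even_iff] at h
    rw [sr, if_pos h]
    simp [ma]
  · rw [Nat.odd_iff] at h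
    rw [sr, if_neg (by omega)]
    simp [ma]

lemma sr_one (l : ℕ) : sr l 1 = if l % 2 = 1 then 1 else 0 := by
  rcases Nat.even_or_odd l with h | h
  · rw [Nat.even_iff] at h
    rw [sr, if_pos h, if_pos (by norm_num), if_neg (by omega)]
  · rw [Nat.odd_iff] at h
    rw [sr, if_neg (by omega), if_pos h]
    simp [ma]

lemma sr_rec (l m : ℕ) :
    sr l (m + 2) = (if l % 2 = 1 then 1 else 0) * sr l (m + 1) + (m + 1) * l * sr l m := by
  rcases Nat.even_or_odd l with h | h
  · rw [Nat.even_iff] at h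
    rw [if_neg (by omega), zero_mul, zero_add, sr, sr, if_pos h, if_pos h]
    rcases Nat.even_or_odd m with hm | hm
    · rw [Nat.even_iff] at hm
      rw [if_neg (by omega), if_neg (by omega)]
      obtain ⟨s, rfl⟩ : ∃ s, m = 2 * s := ⟨m / 2, by omega⟩
      have h1 : (2 * s + 2) / 2 = s + 1 := by omega
      have h2 : 2 * s / 2 = s := by omega
      rw [h1, h2, ma_eq_ma' _ _ (by omega), ma_eq_ma' _ _ (by omega)]
      have key : ma' (2 * s + 2) (s + 1) = (2 * s + 1) * ma' (2 * s) s := by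
        rw [ma'_rec, ma'_eq_zero (2 * s + 1) (s + 1) (by omega)]
        omega
      rw [key]
      ring
    · rw [Nat.odd_iff] at hm
      rw [if_pos (by omega), if_pos (by omega)]
      simp
  · rw [Nat.odd_iff] at h
    rw [if_pos h, one_mul, sr_odd_eq_T _ _ h, sr_odd_eq_T _ _ h, sr_odd_eq_T _ _ h, T_rec]


open Equiv Finset

def SS (l : ℕ) (u : ZMod l) (α : Type) : Type :=
  {p : Equiv.Perm α × (α → ZMod l) // p.1 * p.1 = 1 ∧ ∀ r, p.2 (p.1 r) + p.2 r = u}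

instance (l : ℕ) [NeZero l] (u : ZMod l) (α : Type) [Finite α] : Finite (SS l u α) := by
  unfold SS
  infer_instance

def Sf (l : ℕ) (u : ZMod l) (α : Type) (x₀ y : α) : Type :=
  {p : Equiv.Perm α × (α → ZMod l) //
    (p.1 * p.1 = 1 ∧ ∀ r, p.2 (p.1 r) + p.2 r = u) ∧ p.1 x₀ = y}

instance (l : ℕ) [NeZero l] (u : ZMod l) (α : Type) [Finite α] (x₀ y : α) :
    Finite (Sf l u α x₀ y) := by
  unfold Sf
  infer_instance

lemma invol {α : Type} {π : Equiv.Perm α} (h : π * π = 1) (w : α) : π (π w) = w := by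
  have h2 : (π * π) w = (1 : Equiv.Perm α) w := by rw [h]
  simpa using h2

lemma nat_card_sigma {ι : Type} [Fintype ι] (f : ι → Type) [∀ i, Finite (f i)] :
    Nat.card (Sigma f) = ∑ i, Nat.card (f i) := by
  letI : ∀ i, Fintype (f i) := fun i => Fintype.ofFinite _
  rw [Nat.card_eq_fintype_card, Fintype.card_sigma]
  exact Finset.sum_congr rfl fun i _ => (Nat.card_eq_fintype_card).symm

def E0 (l : ℕ) (u : ZMod l) (α : Type) (x₀ : α) :
    SS l u α ≃ Σ y : α, Sf l u α x₀ y where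
  toFun p := ⟨p.1.1 x₀, ⟨p.1, p.2, rfl⟩⟩
  invFun q := ⟨q.2.1, q.2.2.1⟩
  left_inv p := rfl
  right_inv q := by
    rcases q with ⟨y, ⟨p, hp, rfl⟩⟩
    rfl

lemma mem1 {α : Type} {π : Equiv.Perm α} {x₀ : α} (hinv : π * π = 1) (hfix : π x₀ = x₀) :
    ∀ z : α, z ≠ x₀ ↔ π z ≠ x₀ := by
  intro z
  constructor
  · intro h hc
    exact h (by rw [← invol hinv z, hc, hfix])
  · intro h hc
    exact h (by rw [hc, hfix])

def E1 (l : ℕ) (u : ZMod l) (α : Type) [DecidableEq α] (x₀ : α) :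
    Sf l u α x₀ x₀ ≃ ({x : ZMod l // x + x = u} × SS l u {z : α // z ≠ x₀}) where
  toFun p :=
    ⟨⟨p.1.2 x₀, by have h := p.2.1.2 x₀; rwa [p.2.2] at h⟩,
     ⟨(p.1.1.subtypePerm (fun z => (mem1 p.2.1.1 p.2.2 z).symm), fun z => p.1.2 z.1),
      by
        constructor
        · ext z
          simp only [Equiv.Perm.mul_apply, Equiv.Perm.subtypePerm_apply, Equiv.Perm.one_apply, invol p.2.1.1]
        · intro r
          exact p.2.1.2 r.1⟩⟩
  invFun q :=
    ⟨(Equiv.Perm.ofSubtype q.2.1.1, fun z => if h : z = x₀ then q.1.1 else q.2.1.2 ⟨z, h⟩),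
     by
      have hfix : Equiv.Perm.ofSubtype q.2.1.1 x₀ = x₀ :=
        Equiv.Perm.ofSubtype_apply_of_not_mem (p := fun z => z ≠ x₀) _ (by simp)
      refine ⟨⟨by rw [← map_mul, q.2.2.1, map_one], ?_⟩, hfix⟩
      intro z
      dsimp only
      by_cases h : z = x₀
      · subst h
        rw [hfix, dif_pos rfl]
        exact q.1.2
      · rw [Equiv.Perm.ofSubtype_apply_of_mem (p := fun z => z ≠ x₀) q.2.1.1 h,
          dif_neg (q.2.1.1 ⟨z, h⟩).2, dif_neg h]
        have h2 := q.2.2.2 ⟨z, h⟩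
        simpa using h2⟩
  left_inv p := by
    apply Subtype.ext
    apply Prod.ext
    · exact Equiv.Perm.ofSubtype_subtypePerm (fun z => (mem1 p.2.1.1 p.2.2 z).symm) fun z hz => by
        intro hc
        exact hz (by rw [hc, p.2.2])
    · funext z
      dsimp only
      by_cases h : z = x₀
      · subst h; rw [dif_pos rfl]
      · rw [dif_neg h]
  right_inv q := by
    refine Prod.ext (Subtype.ext ?_) (Subtype.ext (Prod.ext ?_ ?_))
    · dsimp only
      rw [dif_pos rfl]
    · ext z
      simp only [Equiv.Perm.subtypePerm_apply,
        Equiv.Perm.ofSubtype_apply_of_mem (p := fun w => w ≠ x₀) _ z.2]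
    · funext z
      dsimp only
      rw [dif_neg z.2]

lemma mem2 {α : Type} {π : Equiv.Perm α} {x₀ y : α} (hinv : π * π = 1) (hfix : π x₀ = y) :
    ∀ z : α, (z ≠ x₀ ∧ z ≠ y) ↔ (π z ≠ x₀ ∧ π z ≠ y) := by
  have hy : π y = x₀ := by rw [← hfix, invol hinv]
  intro z
  constructor
  · rintro ⟨h1, h2⟩
    refine ⟨fun hc => h2 ?_, fun hc => h1 ?_⟩
    · rw [← invol hinv z, hc, hfix]
    · rw [← invol hinv z, hc, hy]
  · rintro ⟨h1, h2⟩
    refine ⟨fun hc => h2 ?_, fun hc => h1 ?_⟩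
    · rw [hc, hfix]
    · rw [hc, hy]

section E2facts

variable {α : Type} [DecidableEq α] {x₀ y : α}

lemma sw_x0 (hxy : y ≠ x₀) (π'' : Equiv.Perm {z : α // z ≠ x₀ ∧ z ≠ y}) :
    (Equiv.swap x₀ y * Equiv.Perm.ofSubtype π'') x₀ = y := by
  rw [Equiv.Perm.mul_apply,
    Equiv.Perm.ofSubtype_apply_of_not_mem (p := fun z => z ≠ x₀ ∧ z ≠ y) _ (by simp),
    Equiv.swap_apply_left]

lemma sw_y (hxy : y ≠ x₀) (π'' : Equiv.Perm {z : α // z ≠ x₀ ∧ z ≠ y}) :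
    (Equiv.swap x₀ y * Equiv.Perm.ofSubtype π'') y = x₀ := by
  rw [Equiv.Perm.mul_apply,
    Equiv.Perm.ofSubtype_apply_of_not_mem (p := fun z => z ≠ x₀ ∧ z ≠ y) _ (by simp),
    Equiv.swap_apply_right]

lemma sw_z (π'' : Equiv.Perm {z : α // z ≠ x₀ ∧ z ≠ y}) (z : α) (h : z ≠ x₀ ∧ z ≠ y) :
    (Equiv.swap x₀ y * Equiv.Perm.ofSubtype π'') z = (π'' ⟨z, h⟩ : α) := by
  rw [Equiv.Perm.mul_apply,
    Equiv.Perm.ofSubtype_apply_of_mem (p := fun z => z ≠ x₀ ∧ z ≠ y) _ h,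
    Equiv.swap_apply_of_ne_of_ne (π'' ⟨z, h⟩).2.1 (π'' ⟨z, h⟩).2.2]

end E2facts

def E2 (l : ℕ) (u : ZMod l) (α : Type) [DecidableEq α] (x₀ y : α) (hxy : y ≠ x₀) :
    Sf l u α x₀ y ≃ (ZMod l × SS l u {z : α // z ≠ x₀ ∧ z ≠ y}) where
  toFun p :=
    ⟨p.1.2 x₀,
     ⟨(p.1.1.subtypePerm (fun z => (mem2 p.2.1.1 p.2.2 z).symm), fun z => p.1.2 z.1),
      by
        constructor
        · ext z
          simp only [Equiv.Perm.mul_apply, Equiv.Perm.subtypePerm_apply, Equiv.Perm.one_apply, invol p.2.1.1]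
        · intro r
          exact p.2.1.2 r.1⟩⟩
  invFun q :=
    ⟨(Equiv.swap x₀ y * Equiv.Perm.ofSubtype q.2.1.1,
      fun z => if h1 : z = x₀ then q.1 else if h2 : z = y then u - q.1 else q.2.1.2 ⟨z, h1, h2⟩),
     by
      refine ⟨⟨?_, ?_⟩, sw_x0 hxy q.2.1.1⟩
      · ext z
        rw [Equiv.Perm.mul_apply, Equiv.Perm.one_apply]
        by_cases h1 : z = x₀
        · rw [h1, sw_x0 hxy, sw_y hxy]
        · by_cases h2 : z = y
          · rw [h2, sw_y hxy, sw_x0 hxy]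
          · rw [sw_z q.2.1.1 z ⟨h1, h2⟩, sw_z q.2.1.1 _ (q.2.1.1 ⟨z, ⟨h1, h2⟩⟩).2]
            show ((q.2.1.1 (q.2.1.1 ⟨z, ⟨h1, h2⟩⟩) : {z : α // z ≠ x₀ ∧ z ≠ y}) : α) = z
            rw [invol q.2.2.1 ⟨z, ⟨h1, h2⟩⟩]
      · intro z
        dsimp only
        by_cases h1 : z = x₀
        · rw [h1, sw_x0 hxy q.2.1.1, dif_neg hxy, dif_pos rfl, dif_pos rfl]
          exact sub_add_cancel u q.1
        · by_cases h2 : z = y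
          · rw [h2, sw_y hxy q.2.1.1, dif_pos rfl, dif_neg hxy, dif_pos rfl, add_comm]
            exact sub_add_cancel u q.1
          · rw [sw_z q.2.1.1 z ⟨h1, h2⟩, dif_neg (q.2.1.1 ⟨z, h1, h2⟩).2.1,
              dif_neg (q.2.1.1 ⟨z, h1, h2⟩).2.2, dif_neg h1, dif_neg h2]
            have h3 := q.2.2.2 ⟨z, h1, h2⟩
            simpa using h3⟩
  left_inv p := by
    rcases p with ⟨⟨π, a⟩, ⟨⟨hinv, ha⟩, hfix⟩⟩
    simp only at hinv ha hfix
    have hy : π y = x₀ := by rw [← hfix, invol hinv]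
    apply Subtype.ext
    apply Prod.ext
    · dsimp only
      ext z
      by_cases h1 : z = x₀
      · rw [h1, sw_x0 hxy, hfix]
      · by_cases h2 : z = y
        · rw [h2, sw_y hxy, hy]
        · rw [sw_z _ z ⟨h1, h2⟩, Equiv.Perm.subtypePerm_apply]
    · funext z
      dsimp only
      by_cases h1 : z = x₀
      · rw [dif_pos h1, h1]
      · by_cases h2 : z = y
        · rw [dif_neg h1, dif_pos h2, h2]
          have h3 := ha x₀
          rw [hfix] at h3
          exact (eq_sub_of_add_eq h3).symm
        · rw [dif_neg h1, dif_neg h2]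
  right_inv q := by
    refine Prod.ext ?_ (Subtype.ext (Prod.ext ?_ ?_))
    · dsimp only
      rw [dif_pos rfl]
    · ext z
      rcases z with ⟨z, h12⟩
      simp only [Equiv.Perm.subtypePerm_apply]
      exact sw_z q.2.1.1 z h12
    · funext z
      rcases z with ⟨z, h12⟩
      dsimp only
      rw [dif_neg h12.1, dif_neg h12.2]

lemma core (l : ℕ) [NeZero l] (u : ZMod l)
    (hc : Nat.card {x : ZMod l // x + x = u} = if l % 2 = 1 then 1 else 0) :
    ∀ m : ℕ, ∀ (α : Type) [Fintype α] [DecidableEq α], Fintype.card α = m →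
      Nat.card (SS l u α) = sr l m := by
  intro m
  induction m using Nat.strong_induction_on with
  | _ m ih =>
    match m with
    | 0 =>
      intro α _ _ hα
      haveI : IsEmpty α := Fintype.card_eq_zero_iff.mp hα
      haveI : Subsingleton (Equiv.Perm α) :=
        ⟨fun f g => Equiv.ext fun z => isEmptyElim z⟩
      haveI : Nonempty (SS l u α) :=
        ⟨⟨(1, fun z => isEmptyElim z), ⟨mul_one 1, fun r => isEmptyElim r⟩⟩⟩
      haveI : Subsingleton (SS l u α) :=
        ⟨fun p q => Subtype.ext (Prod.ext (Subsingleton.elim _ _)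
          (funext fun z => isEmptyElim z))⟩
      rw [Nat.card_unique, sr_zero]
    | 1 =>
      intro α _ _ hα
      obtain ⟨x₀, hx₀⟩ := Fintype.card_eq_one_iff.mp hα
      have key : SS l u α ≃ {x : ZMod l // x + x = u} := {
        toFun := fun p => ⟨p.1.2 x₀, by
          have h := p.2.2 x₀
          rwa [hx₀ (p.1.1 x₀)] at h⟩
        invFun := fun c => ⟨(1, fun _ => c.1), ⟨mul_one 1, fun r => c.2⟩⟩
        left_inv := fun p => Subtype.ext (Prod.ext
          (Equiv.ext fun z => by rw [hx₀ (p.1.1 z), hx₀ z]; rfl)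
          (funext fun z => by rw [show z = x₀ from hx₀ z]))
        right_inv := fun c => rfl }
      rw [Nat.card_congr key, hc, sr_one]
    | (m + 2) =>
      intro α _ _ hα
      have hpos : 0 < Fintype.card α := by omega
      obtain ⟨x₀⟩ := Fintype.card_pos_iff.mp hpos
      have card1 : Fintype.card {z : α // z ≠ x₀} = m + 1 := by
        rw [Fintype.card_subtype_compl, Fintype.card_subtype_eq, hα]
        omega
      have card2 : ∀ y : α, y ≠ x₀ → Fintype.card {z : α // z ≠ x₀ ∧ z ≠ y} = m := by
        intro y hy
        rw [Fintype.card_subtype]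
        have he : (Finset.univ.filter fun z : α => z ≠ x₀ ∧ z ≠ y)
            = (Finset.univ.erase x₀).erase y := by
          ext z
          simp only [Finset.mem_filter, Finset.mem_erase, Finset.mem_univ, and_true, true_and]
          tauto
        rw [he, Finset.card_erase_of_mem (by simp [hy]), Finset.card_erase_of_mem (by simp),
          Finset.card_univ, hα]
        omega
      rw [Nat.card_congr (E0 l u α x₀), nat_card_sigma]
      rw [← Finset.add_sum_erase Finset.univ _ (Finset.mem_univ x₀)]
      have hfib1 : Nat.card (Sf l u α x₀ x₀)
          = (if l % 2 = 1 then 1 else 0) * sr l (m + 1) := by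
        rw [Nat.card_congr (E1 l u α x₀), Nat.card_prod, hc,
          ih (m + 1) (by omega) {z : α // z ≠ x₀} card1]
      have hfib2 : ∀ y ∈ Finset.univ.erase x₀,
          Nat.card (Sf l u α x₀ y) = l * sr l m := by
        intro y hy
        have hy' : y ≠ x₀ := (Finset.mem_erase.mp hy).1
        rw [Nat.card_congr (E2 l u α x₀ y hy'), Nat.card_prod, Nat.card_zmod,
          ih m (by omega) {z : α // z ≠ x₀ ∧ z ≠ y} (card2 y hy')]
      rw [hfib1, Finset.sum_congr rfl hfib2, Finset.sum_const,
        Finset.card_erase_of_mem (Finset.mem_univ x₀), Finset.card_univ, hα, smul_eq_mul,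
        sr_rec, show m + 2 - 1 = m + 1 from by omega]
      ring

/-- rotation -/

def Rot (g l : ℕ) (c : ZMod l) : Equiv.Perm (ZMod g × ZMod l) :=
  Equiv.prodCongr (Equiv.refl _) (Equiv.addRight c)

lemma Rot_apply (g l : ℕ) (c : ZMod l) (w : ZMod g × ZMod l) : Rot g l c w = (w.1, w.2 + c) := rfl

lemma Rot_mul (g l : ℕ) (a b : ZMod l) : Rot g l a * Rot g l b = Rot g l (a + b) := by
  ext w
  · rfl
  · show w.2 + b + a = w.2 + (a + b)
    ring

lemma Rot_pow (g l : ℕ) (c : ZMod l) (k : ℕ) : (Rot g l c) ^ k = Rot g l (k * c) := by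
  induction k with
  | zero =>
      ext w
      · rfl
      · show w.2 = w.2 + (0 : ℕ) * c
        simp
  | succ k ihk =>
      rw [pow_succ, ihk, Rot_mul]
      congr 1
      push_cast
      ring

/-- square roots of the rotation correspond to decorated involutions -/
lemma card_sqrt (g l : ℕ) [NeZero g] [NeZero l] (m' : ℕ) (hcop : Nat.Coprime m' l) :
    Nat.card {τ : Equiv.Perm (ZMod g × ZMod l) // τ * τ = Rot g l (m' : ZMod l)}
      = Nat.card (SS l (m' : ZMod l) (ZMod g)) := by
  set u : ZMod l := (m' : ZMod l) with hu
  -- the map from decorated involutions to square roots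
  have hF : ∀ p : SS l u (ZMod g),
      Function.Bijective (fun w : ZMod g × ZMod l => (p.1.1 w.1, p.1.2 w.1 + w.2)) := by
    intro p
    constructor
    · rintro ⟨r, t⟩ ⟨r', t'⟩ hw
      rw [Prod.mk.injEq] at hw
      obtain ⟨h1, h2⟩ := hw
      have hr : r = r' := p.1.1.injective h1
      subst hr
      simp only [add_right_inj] at h2
      rw [h2]
    · rintro ⟨s, t⟩
      refine ⟨(p.1.1 s, t - p.1.2 (p.1.1 s)), ?_⟩
      simp only
      rw [invol p.2.1 s]
      rw [add_sub_cancel]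
  let F : SS l u (ZMod g) → {τ : Equiv.Perm (ZMod g × ZMod l) // τ * τ = Rot g l u} := fun p =>
    ⟨Equiv.ofBijective _ (hF p), by
      apply Equiv.ext
      rintro ⟨r, t⟩
      show (p.1.1 (p.1.1 r), p.1.2 (p.1.1 r) + (p.1.2 r + t)) = (r, t + u)
      rw [invol p.2.1 r, ← add_assoc, p.2.2 r, add_comm]⟩
  symm
  apply Nat.card_congr
  apply Equiv.ofBijective F
  constructor
  · intro p p' h
    have hval : ∀ w : ZMod g × ZMod l, (p.1.1 w.1, p.1.2 w.1 + w.2) = (p'.1.1 w.1, p'.1.2 w.1 + w.2) := by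
      intro w
      have := congrArg Subtype.val h
      exact congrFun (congrArg (fun (e : Equiv.Perm _) => (e : _ → _)) this) w
    apply Subtype.ext
    apply Prod.ext
    · ext r
      exact (Prod.mk.injEq _ _ _ _).mp (hval (r, 0)) |>.1
    · funext r
      have h2 := (Prod.mk.injEq _ _ _ _).mp (hval (r, 0)) |>.2
      simpa using h2
  · rintro ⟨τ, hτ⟩
    -- τ commutes with Rot g l 1
    have hcomm0 : Commute τ (Rot g l u) := by
      rw [← hτ]
      exact (Commute.refl τ).mul_right (Commute.refl τ)
    have hR1 : Rot g l 1 = (Rot g l u) ^ (u⁻¹).val := by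
      rw [Rot_pow]
      congr 1
      rw [ZMod.natCast_val, ZMod.cast_id, mul_comm, ZMod.coe_mul_inv_eq_one m' hcop]
    have hcomm : Commute τ (Rot g l 1) := by
      rw [hR1]
      exact hcomm0.pow_right _
    have step : ∀ (r : ZMod g) (t : ZMod l), τ (r, t) = ((τ (r, 0)).1, (τ (r, 0)).2 + t) := by
      have stepN : ∀ (k : ℕ) (r : ZMod g),
          τ (r, (k : ZMod l)) = ((τ (r, 0)).1, (τ (r, 0)).2 + (k : ZMod l)) := by
        intro k
        induction k with
        | zero => intro r; simp
        | succ k ihk =>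
            intro r
            have hswap : ∀ w, τ (Rot g l 1 w) = Rot g l 1 (τ w) := by
              intro w
              have hw := congrArg (fun (e : Equiv.Perm _) => e w) hcomm.eq
              simpa [Equiv.Perm.mul_apply] using hw
            have h1 : ((k + 1 : ℕ) : ZMod l) = (k : ZMod l) + 1 := by push_cast; ring
            have h2 : (r, ((k + 1 : ℕ) : ZMod l)) = Rot g l 1 (r, (k : ZMod l)) := by
              rw [Rot_apply, h1]
            rw [h2, hswap, ihk r, Rot_apply, h1, add_assoc]
      intro r t
      have : t = ((t.val : ℕ) : ZMod l) := by rw [ZMod.natCast_val, ZMod.cast_id]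
      rw [this, stepN]
    have hττ : ∀ w : ZMod g × ZMod l, τ (τ w) = (w.1, w.2 + u) := by
      intro w
      have := congrArg (fun (e : Equiv.Perm _) => e w) hτ
      simpa [Equiv.Perm.mul_apply, Rot_apply] using this
    set π₀ : ZMod g → ZMod g := fun r => (τ (r, 0)).1 with hπ₀
    set a₀ : ZMod g → ZMod l := fun r => (τ (r, 0)).2 with ha₀
    have hkey : ∀ r : ZMod g, (π₀ (π₀ r), a₀ (π₀ r) + a₀ r) = (r, u) := by
      intro r
      have h1 := hττ (r, 0)
      rw [show τ (r, 0) = (π₀ r, a₀ r) from rfl, step (π₀ r) (a₀ r)] at h1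
      simpa using h1
    have hinvol : Function.Involutive π₀ := fun r => congrArg Prod.fst (hkey r)
    have ha : ∀ r, a₀ (π₀ r) + a₀ r = u := fun r => congrArg Prod.snd (hkey r)
    refine ⟨⟨(Function.Involutive.toPerm π₀ hinvol, a₀), ⟨?_, ha⟩⟩, ?_⟩
    · ext r
      exact hinvol r
    · apply Subtype.ext
      apply Equiv.ext
      rintro ⟨r, t⟩
      show (π₀ r, a₀ r + t) = τ (r, t)
      exact (step r t).symm

lemma card_two_torsion (l : ℕ) [NeZero l] (m' : ℕ) (hcop : Nat.Coprime m' l) :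
    Nat.card {x : ZMod l // x + x = (m' : ZMod l)} = if l % 2 = 1 then 1 else 0 := by
  have hl : 0 < l := Nat.pos_of_ne_zero (NeZero.ne l)
  rcases Nat.even_or_odd l with h | h
  · rw [Nat.even_iff] at h
    rw [if_neg (by omega)]
    haveI : IsEmpty {x : ZMod l // x + x = (m' : ZMod l)} := by
      refine ⟨fun xh => ?_⟩
      obtain ⟨x, hx⟩ := xh
      have h2 : (2 : ℕ) ∣ l := by omega
      have hodd : ¬ (2 ∣ m') := by
        intro hd
        have hdg := Nat.dvd_gcd hd h2
        rw [Nat.Coprime] at hcop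
        rw [hcop] at hdg
        omega
      have hcast := congrArg (ZMod.castHom h2 (ZMod 2)) hx
      rw [map_add, map_natCast] at hcast
      have hxx : (ZMod.castHom h2 (ZMod 2)) x + (ZMod.castHom h2 (ZMod 2)) x = 0 := by
        rw [← two_mul, show (2 : ZMod 2) = 0 from by decide, zero_mul]
      rw [hxx] at hcast
      have hm2 : ((m' : ZMod 2)) = 1 := by
        rw [← ZMod.natCast_mod m' 2, show m' % 2 = 1 from by omega]
        norm_num
      rw [hm2] at hcast
      exact absurd hcast (by decide)
    rw [Nat.card_of_isEmpty]
  · rw [Nat.odd_iff] at h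
    rw [if_pos h]
    have u2 : IsUnit (2 : ZMod l) := by
      have h22 : ((2 : ℕ) : ZMod l) = (2 : ZMod l) := by push_cast; rfl
      rw [← h22, ZMod.isUnit_iff_coprime]
      exact (Nat.prime_two.coprime_iff_not_dvd).mpr (by omega)
    haveI : Nonempty {x : ZMod l // x + x = (m' : ZMod l)} := by
      refine ⟨⟨(2 : ZMod l)⁻¹ * m', ?_⟩⟩
      rw [← two_mul, ← mul_assoc, ZMod.mul_inv_of_unit _ u2, one_mul]
    haveI : Subsingleton {x : ZMod l // x + x = (m' : ZMod l)} := by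
      refine ⟨fun a b => Subtype.ext ?_⟩
      obtain ⟨x, hx⟩ := a
      obtain ⟨y, hy⟩ := b
      have hxy : (2 : ZMod l) * x = 2 * y := by rw [two_mul, two_mul, hx, hy]
      exact u2.mul_left_cancel hxy
    rw [Nat.card_unique]

lemma conj_card (n g l m' : ℕ) [NeZero n] [NeZero g] [NeZero l] (hn : n = g * l)
    (σ : Equiv.Perm (ZMod n)) (hσk : ∀ (k : ℕ) (x : ZMod n), (σ ^ k) x = x + (k : ℕ)) :
    Nat.card {τ : Equiv.Perm (ZMod n) // τ * τ = σ ^ (g * m')}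
      = Nat.card {τ : Equiv.Perm (ZMod g × ZMod l) // τ * τ = Rot g l (m' : ZMod l)} := by
  have hg : 0 < g := Nat.pos_of_ne_zero (NeZero.ne g)
  have hl : 0 < l := Nat.pos_of_ne_zero (NeZero.ne l)
  have hgn : g ≤ n := by
    rw [hn]
    exact Nat.le_mul_of_pos_right g hl
  set b : ZMod n → ZMod g × ZMod l :=
    fun x => ((x.val : ZMod g), ((x.val / g : ℕ) : ZMod l)) with hb
  have hcastg : ∀ a : ℕ, ((a % n : ℕ) : ZMod g) = (a : ZMod g) := by
    intro a
    conv_rhs => rw [← Nat.mod_add_div a n]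
    push_cast
    rw [show ((n : ℕ) : ZMod g) = 0 from (ZMod.natCast_eq_zero_iff n g).mpr ⟨l, hn⟩]
    ring
  have hdivlt : ∀ x : ZMod n, x.val / g < l := by
    intro x
    rw [Nat.div_lt_iff_lt_mul hg]
    exact lt_of_lt_of_eq (ZMod.val_lt x) (by rw [hn, mul_comm])
  have hinj : Function.Injective b := by
    intro x y hxy
    rw [Prod.mk.injEq] at hxy
    obtain ⟨h1, h2⟩ := hxy
    have e1 : x.val % g = y.val % g := by
      have h3 := congrArg ZMod.val h1
      rwa [ZMod.val_natCast, ZMod.val_natCast] at h3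
    have e2 : x.val / g = y.val / g := by
      have h3 := congrArg ZMod.val h2
      rwa [ZMod.val_natCast, ZMod.val_natCast, Nat.mod_eq_of_lt (hdivlt x),
        Nat.mod_eq_of_lt (hdivlt y)] at h3
    have e3 : x.val = y.val := by
      have d1 := Nat.div_add_mod x.val g
      have d2 := Nat.div_add_mod y.val g
      rw [← d1, ← d2, e1, e2]
    have h4 := congrArg (Nat.cast : ℕ → ZMod n) e3
    rwa [ZMod.natCast_val, ZMod.natCast_val, ZMod.cast_id, ZMod.cast_id] at h4
  have hbij : Function.Bijective b :=
    (Fintype.bijective_iff_injective_and_card b).mpr ⟨hinj, by simp [ZMod.card, hn]⟩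
  set β : ZMod n ≃ ZMod g × ZMod l := Equiv.ofBijective b hbij with hβ
  have hstep : ∀ x : ZMod n, β (x + ((g : ℕ) : ZMod n)) = Rot g l 1 (β x) := by
    intro x
    show b (x + ((g : ℕ) : ZMod n)) = ((b x).1, (b x).2 + 1)
    have hvlt : x.val < n := ZMod.val_lt x
    have hval : (x + ((g : ℕ) : ZMod n)).val = (x.val + g) % n := by
      rw [ZMod.val_add, ZMod.val_natCast]
      conv_rhs => rw [Nat.add_mod x.val g n]
      rw [Nat.mod_eq_of_lt hvlt]
    refine Prod.ext ?_ ?_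
    · show (((x + ((g : ℕ) : ZMod n)).val : ℕ) : ZMod g) = ((x.val : ℕ) : ZMod g)
      rw [hval, hcastg]
      push_cast [ZMod.natCast_self]
      ring
    · show (((x + ((g : ℕ) : ZMod n)).val / g : ℕ) : ZMod l)
        = ((x.val / g : ℕ) : ZMod l) + 1
      rcases lt_or_ge (x.val + g) n with hlt | hge
      · rw [hval, Nat.mod_eq_of_lt hlt, Nat.add_div_right x.val hg]
        push_cast
        ring
      · have hmod : (x.val + g) % n = x.val + g - n := by
          rw [Nat.mod_eq_sub_mod hge, Nat.mod_eq_of_lt (by clear hn; omega)]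
        have hvg : x.val / g = l - 1 := by
          have hub : x.val / g < l := hdivlt x
          have hlg : (l - 1) * g = n - g := by
            rw [Nat.sub_mul, one_mul, hn, mul_comm]
          have hlb : l - 1 ≤ x.val / g := by
            rw [Nat.le_div_iff_mul_le hg, hlg]
            clear hn
            omega
          omega
        have hz : (x.val + g - n) / g = 0 := Nat.div_eq_of_lt (by clear hn; omega)
        rw [hval, hmod, hz, hvg]
        have hcc : ((l - 1 : ℕ) : ZMod l) + 1 = ((l - 1 + 1 : ℕ) : ZMod l) := by
          push_cast
          ring
        rw [hcc, Nat.sub_add_cancel hl]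
        simp [ZMod.natCast_self]
  have hstepc : ∀ (c : ℕ) (x : ZMod n),
      β (x + ((g * c : ℕ) : ZMod n)) = Rot g l ((c : ℕ) : ZMod l) (β x) := by
    intro c
    induction c with
    | zero =>
        intro x
        simp [Rot_apply]
    | succ c ihc =>
        intro x
        have h1 : ((g * (c + 1) : ℕ) : ZMod n) = ((g * c : ℕ) : ZMod n) + ((g : ℕ) : ZMod n) := by
          push_cast
          ring
        rw [h1, ← add_assoc, hstep (x + ((g * c : ℕ) : ZMod n)), ihc x, Rot_apply, Rot_apply,
          Rot_apply]
        refine Prod.ext rfl ?_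
        show (β x).2 + ((c : ℕ) : ZMod l) + 1 = (β x).2 + (((c + 1 : ℕ) : ℕ) : ZMod l)
        push_cast
        ring
  have hmain : Equiv.permCongr β (σ ^ (g * m')) = Rot g l ((m' : ℕ) : ZMod l) := by
    apply Equiv.ext
    intro w
    rw [Equiv.permCongr_apply, hσk (g * m') (β.symm w), hstepc m' (β.symm w),
      Equiv.apply_symm_apply]
  have hpcmul : ∀ p q : Equiv.Perm (ZMod n),
      Equiv.permCongr β (p * q) = Equiv.permCongr β p * Equiv.permCongr β q := by
    intro p q
    apply Equiv.ext
    intro w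
    simp [Equiv.permCongr_apply, Equiv.Perm.mul_apply]
  apply Nat.card_congr
  refine Equiv.subtypeEquiv (Equiv.permCongr β) fun τ => ⟨fun h => ?_, fun h => ?_⟩
  · rw [← hpcmul, h, hmain]
  · apply (Equiv.permCongr β).injective
    rw [hpcmul, h, hmain]

lemma card_gcd_eq (n g : ℕ) (hn0 : 0 < n) (hg : g ∣ n) (hgpos : 0 < g) :
    ((Finset.range n).filter fun m => Nat.gcd m n = g).card = (n / g).totient := by
  rw [Nat.totient]
  apply Finset.card_nbij' (i := fun m => m / g) (j := fun m' => g * m')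
  · intro m hm
    obtain ⟨hmr, hmg⟩ := Finset.mem_filter.mp hm
    rw [Finset.mem_coe, Finset.mem_filter]
    refine ⟨Finset.mem_range.mpr (Nat.div_lt_div_of_lt_of_dvd hg (Finset.mem_range.mp hmr)), ?_⟩
    have hc := Nat.coprime_div_gcd_div_gcd (m := m) (n := n) (by rw [hmg]; exact hgpos)
    rw [hmg] at hc
    exact hc.symm
  · intro m' hm'
    obtain ⟨hmr', hcop⟩ := Finset.mem_filter.mp hm'
    rw [Finset.mem_coe, Finset.mem_filter]
    constructor
    · apply Finset.mem_range.mpr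
      calc g * m' < g * (n / g) := by
            exact (mul_lt_mul_iff_right₀ hgpos).mpr (Finset.mem_range.mp hmr')
        _ = n := Nat.mul_div_cancel' hg
    · have hnn : n = g * (n / g) := (Nat.mul_div_cancel' hg).symm
      rw [hnn, Nat.gcd_mul_left]
      have h1 : Nat.gcd m' (n / g) = 1 := Nat.Coprime.symm hcop
      rw [h1, mul_one]
  · intro m hm
    obtain ⟨-, hmg⟩ := Finset.mem_filter.mp hm
    have hgm : g ∣ m := hmg ▸ Nat.gcd_dvd_left m n
    exact Nat.mul_div_cancel' hgm
  · intro m' _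
    exact Nat.mul_div_cancel_left m' hgpos


/-- Let `n ≥ 1`.  Then
`Σ_{h=0}^{n-1} Σ_{k=0}^{n-1} |{π : π = σ^k ∘ π⁻¹ ∘ σ^{-h}}| = n · Σ_{d ∣ n} φ(d)·sr(d, n/d)`,
where `σ : i ↦ i + 1` on `ℤ/nℤ` and `φ` is Euler's totient function. -/
theorem stmt_8 (n : ℕ) (hn : 1 ≤ n)
    (σ : Equiv.Perm (ZMod n)) (hσ : ∀ i, σ i = i + 1) :
    ∑ h ∈ Finset.range n, ∑ k ∈ Finset.range n,
        Nat.card {π : Equiv.Perm (ZMod n) // π = σ ^ k * π⁻¹ * (σ ^ h)⁻¹} =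
      n * ∑ d ∈ n.divisors, d.totient * sr d (n / d) := by
  haveI : NeZero n := ⟨by omega⟩
  have hσk : ∀ (k : ℕ) (x : ZMod n), (σ ^ k) x = x + (k : ℕ) := by
    intro k
    induction k with
    | zero => intro x; simp
    | succ k ihk =>
        intro x
        rw [pow_succ, Equiv.Perm.mul_apply, hσ x, ihk (x + 1)]
        push_cast
        ring
  set f : ℕ → ℕ := fun m => Nat.card {τ : Equiv.Perm (ZMod n) // τ * τ = σ ^ m} with hf
  have step1 : ∀ h k : ℕ,
      Nat.card {π : Equiv.Perm (ZMod n) // π = σ ^ k * π⁻¹ * (σ ^ h)⁻¹} = f (k + h) := by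
    intro h k
    apply Nat.card_congr
    refine Equiv.subtypeEquiv (Equiv.mulRight (σ ^ h)) fun π => ?_
    show π = σ ^ k * π⁻¹ * (σ ^ h)⁻¹ ↔ (π * σ ^ h) * (π * σ ^ h) = σ ^ (k + h)
    rw [pow_add]
    constructor
    · intro h1
      have h2 := congrArg (fun w => w * (σ ^ h * π)) h1
      calc (π * σ ^ h) * (π * σ ^ h) = (π * (σ ^ h * π)) * σ ^ h := by group
        _ = ((σ ^ k * π⁻¹ * (σ ^ h)⁻¹) * (σ ^ h * π)) * σ ^ h := by rw [h2]
        _ = σ ^ k * σ ^ h := by group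
    · intro h2
      calc π = (π * σ ^ h * (π * σ ^ h)) * ((σ ^ h)⁻¹ * π⁻¹ * (σ ^ h)⁻¹) := by group
        _ = (σ ^ k * σ ^ h) * ((σ ^ h)⁻¹ * π⁻¹ * (σ ^ h)⁻¹) := by
            rw [show π * σ ^ h * (π * σ ^ h) = σ ^ k * σ ^ h from by rw [← h2]]
        _ = σ ^ k * π⁻¹ * (σ ^ h)⁻¹ := by group
  have hσn : σ ^ n = 1 := by
    apply Equiv.ext
    intro x
    rw [hσk n x]
    simp [ZMod.natCast_self]
  have hσmod : ∀ a : ℕ, σ ^ a = σ ^ (a % n) := by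
    intro a
    conv_lhs => rw [← Nat.div_add_mod a n, pow_add, pow_mul, hσn, one_pow, one_mul]
  have hfmod : ∀ a : ℕ, f a = f (a % n) := by
    intro a
    simp only [hf]
    rw [hσmod a]
  have sumrange : ∀ G : ZMod n → ℕ,
      ∑ k ∈ Finset.range n, G (k : ZMod n) = ∑ x : ZMod n, G x := by
    intro G
    refine Finset.sum_nbij' (fun k => (k : ZMod n)) (fun x => x.val) ?_ ?_ ?_ ?_ ?_
    · intro k hk
      exact Finset.mem_univ _
    · intro x hx
      exact Finset.mem_range.mpr (ZMod.val_lt x)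
    · intro k hk
      exact ZMod.val_natCast_of_lt (Finset.mem_range.mp hk)
    · intro x hx
      rw [ZMod.natCast_val, ZMod.cast_id]
    · intro k hk
      rfl
  have inner : ∀ h ∈ Finset.range n,
      (∑ k ∈ Finset.range n,
        Nat.card {π : Equiv.Perm (ZMod n) // π = σ ^ k * π⁻¹ * (σ ^ h)⁻¹})
      = ∑ m ∈ Finset.range n, f m := by
    intro h _
    rw [Finset.sum_congr rfl (fun k _ => step1 h k)]
    calc ∑ k ∈ Finset.range n, f (k + h)
        = ∑ k ∈ Finset.range n,
            (fun x : ZMod n => f ((x + (h : ZMod n)).val)) (k : ZMod n) := by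
          apply Finset.sum_congr rfl
          intro k _
          simp only
          rw [hfmod (k + h)]
          congr 1
          rw [show (k : ZMod n) + (h : ZMod n) = ((k + h : ℕ) : ZMod n) from by push_cast; ring,
            ZMod.val_natCast]
      _ = ∑ x : ZMod n, f ((x + (h : ZMod n)).val) := by exact sumrange (fun x => f ((x + (h : ZMod n)).val))
      _ = ∑ x : ZMod n, f x.val :=
          Fintype.sum_bijective (fun x => x + (h : ZMod n))
            (Equiv.addRight ((h : ZMod n))).bijective _ _ (fun x => rfl)
      _ = ∑ m ∈ Finset.range n, f ((m : ZMod n)).val := (sumrange _).symm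
      _ = ∑ m ∈ Finset.range n, f m := by
          apply Finset.sum_congr rfl
          intro m hm
          rw [ZMod.val_natCast_of_lt (Finset.mem_range.mp hm)]
  rw [Finset.sum_congr rfl inner, Finset.sum_const, Finset.card_range, smul_eq_mul]
  congr 1
  -- ∑ m ∈ range n, f m = ∑ d ∈ divisors, φ(d) * sr d (n/d)
  have hmaps : ∀ m ∈ Finset.range n, Nat.gcd m n ∈ n.divisors := by
    intro m _
    exact Nat.mem_divisors.mpr ⟨Nat.gcd_dvd_right m n, by omega⟩
  rw [← Finset.sum_fiberwise_of_maps_to hmaps f]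
  calc ∑ g ∈ n.divisors, ∑ m ∈ (Finset.range n).filter fun m => Nat.gcd m n = g, f m
      = ∑ g ∈ n.divisors, (fun d => d.totient * sr d (n / d)) (n / g) := by
        apply Finset.sum_congr rfl
        intro g hg
        obtain ⟨hgdvd, hn0⟩ := Nat.mem_divisors.mp hg
        have hgpos : 0 < g := Nat.pos_of_mem_divisors hg
        simp only
        rw [Nat.div_div_self hgdvd hn0]
        set l := n / g with hldef
        have hnl : n = g * l := (Nat.mul_div_cancel' hgdvd).symm
        have hlpos : 0 < l := Nat.div_pos (Nat.le_of_dvd (by omega) hgdvd) hgpos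
        haveI : NeZero g := ⟨by omega⟩
        haveI : NeZero l := ⟨by omega⟩
        have hfm : ∀ m ∈ (Finset.range n).filter fun m => Nat.gcd m n = g,
            f m = sr l g := by
          intro m hm
          obtain ⟨hmr, hmg⟩ := Finset.mem_filter.mp hm
          set m' := m / g with hm'def
          have hgm : g ∣ m := hmg ▸ Nat.gcd_dvd_left m n
          have hmm : m = g * m' := (Nat.mul_div_cancel' hgm).symm
          have hcop : Nat.Coprime m' l := by
            have hc := Nat.coprime_div_gcd_div_gcd (m := m) (n := n)
              (by rw [hmg]; exact hgpos)
            rwa [hmg] at hc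
          calc f m = Nat.card {τ : Equiv.Perm (ZMod n) // τ * τ = σ ^ (g * m')} := by
                rw [hf]
                simp only
                rw [hmm]
            _ = Nat.card {τ : Equiv.Perm (ZMod g × ZMod l) //
                  τ * τ = Rot g l (m' : ZMod l)} := conj_card n g l m' hnl σ hσk
            _ = Nat.card (SS l (m' : ZMod l) (ZMod g)) := card_sqrt g l m' hcop
            _ = sr l g :=
                core l (m' : ZMod l) (card_two_torsion l m' hcop) g (ZMod g) (ZMod.card g)
        rw [Finset.sum_congr rfl hfm, Finset.sum_const, smul_eq_mul,
          card_gcd_eq n g (by omega) hgdvd hgpos]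
    _ = ∑ d ∈ n.divisors, d.totient * sr d (n / d) := by exact Nat.sum_div_divisors n (fun d => d.totient * sr d (n / d))
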